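/- For all l ∈ [0, π_2/2], the derivative of arctan(sleaf_2(l)) with respect to l equals cleaf_2(l). -/

import Mathlib

open Set MeasureTheory intervalIntegral
noncomputable def ff (t : ℝ) : ℝ := 1 / Real.sqrt (1 - t ^ 4)

lemma ff_nonneg (t : ℝ) : 0 ≤ ff t := by
  unfold ff; positivity

lemma ff_contAt {x : ℝ} (hx : x ∈ Ioo (-1:ℝ) 1) : ContinuousAt ff x := by
  have hx2 : x ^ 2 < 1 := by nlinarith [hx.1, hx.2]
  have h : (0:ℝ) < 1 - x ^ 4 := by nlinarith [sq_nonneg x]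
  have : Real.sqrt (1 - x ^ 4) ≠ 0 := ne_of_gt (Real.sqrt_pos.2 h)
  exact (continuousAt_const.div ((Real.continuous_sqrt.continuousAt).comp
    (by fun_prop)) this)

lemma ff_contOn : ContinuousOn ff (Ioo (-1:ℝ) 1) :=
  fun x hx => (ff_contAt hx).continuousWithinAt

lemma ff_meas : Measurable ff := by
  apply Measurable.div measurable_const
  exact Real.continuous_sqrt.measurable.comp (measurable_const.sub (measurable_id.pow_const 4))

lemma ff_int01 : IntervalIntegrable ff volume 0 1 := by
  have hg : IntervalIntegrable (fun x : ℝ => ((1:ℝ) - x) ^ (-(1/2) : ℝ)) volume 0 1 := by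
    have := ((intervalIntegral.intervalIntegrable_rpow' (a := 0) (b := 1)
      (r := -(1/2)) (by norm_num)).comp_sub_left 1).symm
    simpa using this
  apply hg.mono_fun' (ff_meas.aestronglyMeasurable)
  rw [Filter.EventuallyLE, ae_restrict_iff' measurableSet_uIoc]
  refine Filter.Eventually.of_forall (fun x hx => ?_)
  rw [Set.uIoc_of_le (by norm_num : (0:ℝ) ≤ 1)] at hx
  obtain ⟨hx0, hx1⟩ := hx
  have h1 : (0:ℝ) ≤ 1 - x := by linarith
  have h3 : x ^ 3 ≤ 1 := pow_le_one₀ hx0.le hx1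
  have h4 : (1:ℝ) - x ≤ 1 - x ^ 4 := by nlinarith [mul_le_mul_of_nonneg_left h3 hx0.le]
  have hs : Real.sqrt (1 - x) ≤ Real.sqrt (1 - x ^ 4) := Real.sqrt_le_sqrt h4
  have key : ff x ≤ (1 - x) ^ (-(1/2) : ℝ) := by
    rw [Real.rpow_neg h1, ← Real.sqrt_eq_rpow]
    rcases eq_or_lt_of_le h1 with h | h
    · have hx' : x = 1 := by linarith
      subst hx'
      unfold ff; norm_num
    · unfold ff
      rw [one_div, inv_le_inv₀ (Real.sqrt_pos.2 (lt_of_lt_of_le h h4)) (Real.sqrt_pos.2 h)]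
      exact hs
  calc ‖ff x‖ = ff x := Real.norm_of_nonneg (ff_nonneg x)
  _ ≤ _ := key

noncomputable def FF (r : ℝ) : ℝ := ∫ t in (0:ℝ)..r, ff t

lemma ff_int {a b : ℝ} (ha : a ∈ Icc (0:ℝ) 1) (hb : b ∈ Icc (0:ℝ) 1) :
    IntervalIntegrable ff volume a b := by
  apply ff_int01.mono_set
  rw [Set.uIcc_of_le (by norm_num : (0:ℝ) ≤ 1)]
  exact Set.uIcc_subset_Icc ha hb

lemma ae_ne_one : ∀ᵐ t : ℝ, t ≠ (1:ℝ) := by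
  rw [ae_iff]
  have : {x : ℝ | ¬ x ≠ 1} = {1} := by ext x; simp
  rw [this]
  exact Real.volume_singleton

lemma FF_sub {a b : ℝ} (ha : a ∈ Icc (0:ℝ) 1) (hb : b ∈ Icc (0:ℝ) 1) :
    FF b - FF a = ∫ t in a..b, ff t := by
  unfold FF
  rw [intervalIntegral.integral_interval_sub_left (ff_int (by norm_num) hb)
    (ff_int (by norm_num) ha)]

lemma FF_gap {a b : ℝ} (ha : 0 ≤ a) (hab : a ≤ b) (hb : b ≤ 1) :
    b - a ≤ FF b - FF a := by
  have ha' : a ∈ Icc (0:ℝ) 1 := ⟨ha, le_trans hab hb⟩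
  have hb' : b ∈ Icc (0:ℝ) 1 := ⟨le_trans ha hab, hb⟩
  rw [FF_sub ha' hb']
  have h1 : (b - a) = ∫ _t in a..b, (1:ℝ) := by simp
  rw [h1]
  apply intervalIntegral.integral_mono_ae_restrict hab intervalIntegrable_const
    (ff_int ha' hb')
  rw [Filter.EventuallyLE, ae_restrict_iff' measurableSet_Icc]
  filter_upwards [ae_ne_one] with t ht htm
  have ht1 : t < 1 := lt_of_le_of_ne (le_trans htm.2 hb) ht
  have ht0 : 0 ≤ t := le_trans ha htm.1
  have h4 : (0:ℝ) ≤ 1 - t ^ 4 := by nlinarith [pow_le_one₀ ht0 ht1.le (n := 4)]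
  have hle : Real.sqrt (1 - t ^ 4) ≤ 1 := by
    exact Real.sqrt_le_one.2 (by nlinarith [pow_nonneg ht0 4])
  have hpos : 0 < Real.sqrt (1 - t ^ 4) := Real.sqrt_pos.2 (by nlinarith [pow_lt_one₀ ht0 ht1 (by norm_num : 4 ≠ 0)])
  unfold ff
  rw [le_div_iff₀ hpos, one_mul]
  exact hle

lemma FF_zero : FF 0 = 0 := intervalIntegral.integral_same

lemma FF_inj {a b : ℝ} (ha : a ∈ Icc (0:ℝ) 1) (hb : b ∈ Icc (0:ℝ) 1)
    (h : FF a = FF b) : a = b := by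
  rcases le_total a b with hab | hab
  · have := FF_gap ha.1 hab hb.2; linarith
  · have := FF_gap hb.1 hab ha.2; linarith

lemma FF_mono {a b : ℝ} (ha : a ∈ Icc (0:ℝ) 1) (hb : b ∈ Icc (0:ℝ) 1)
    (h : FF a ≤ FF b) : a ≤ b := by
  by_contra hab
  push_neg at hab
  have := FF_gap hb.1 hab.le ha.2
  have : a = b := FF_inj ha hb (by linarith)
  exact absurd this (ne_of_gt hab)

lemma FF_contOn : ContinuousOn FF (Icc (0:ℝ) 1) := by
  have h : IntegrableOn ff (uIcc (0:ℝ) 1) volume := by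
    rw [← intervalIntegrable_iff']; exact ff_int01
  have := intervalIntegral.continuousOn_primitive_interval (a := 0) (b := 1) (μ := volume) h
  show ContinuousOn (fun x => ∫ t in (0:ℝ)..x, ff t) (Icc 0 1)
  simpa [Set.uIcc_of_le (by norm_num : (0:ℝ) ≤ 1)] using this

noncomputable def tt (s : ℝ) : ℝ := Real.sqrt (1 - s ^ 2) / Real.sqrt (1 + s ^ 2)

lemma one_add_sq_pos (s : ℝ) : (0:ℝ) < 1 + s ^ 2 := by positivity

lemma tt_cont : Continuous tt := by
  apply Continuous.div
  · exact Real.continuous_sqrt.comp (by fun_prop)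
  · exact Real.continuous_sqrt.comp (by fun_prop)
  · intro x
    exact ne_of_gt (Real.sqrt_pos.2 (one_add_sq_pos x))

lemma tt_zero : tt 0 = 1 := by unfold tt; norm_num

lemma tt_mem {s : ℝ} (hs : s ∈ Icc (0:ℝ) 1) : tt s ∈ Icc (0:ℝ) 1 := by
  constructor
  · unfold tt; positivity
  · unfold tt
    rw [div_le_one (Real.sqrt_pos.2 (one_add_sq_pos s))]
    exact Real.sqrt_le_sqrt (by nlinarith [sq_nonneg s])

lemma tt_anti : AntitoneOn tt (Icc (0:ℝ) 1) := by
  intro a ha b hb hab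
  unfold tt
  apply div_le_div₀ (Real.sqrt_nonneg _) (Real.sqrt_le_sqrt (by nlinarith [ha.1]))
    (Real.sqrt_pos.2 (one_add_sq_pos a))
  exact Real.sqrt_le_sqrt (by nlinarith [ha.1])

lemma sqrt_one_sub_pow4 {t : ℝ} (ht0 : 0 ≤ t) (ht1 : t ≤ 1) :
    Real.sqrt (1 - t ^ 4) = Real.sqrt (1 - t ^ 2) * Real.sqrt (1 + t ^ 2) := by
  rw [← Real.sqrt_mul (by nlinarith [sq_nonneg t])]
  ring_nf

lemma ff_mul_tt {t : ℝ} (ht0 : 0 ≤ t) (ht1 : t < 1) :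
    ff t * tt t = 1 / (1 + t ^ 2) := by
  have hA : (0:ℝ) < Real.sqrt (1 - t ^ 2) := Real.sqrt_pos.2 (by nlinarith)
  have hB : (0:ℝ) < Real.sqrt (1 + t ^ 2) := Real.sqrt_pos.2 (one_add_sq_pos t)
  have hB2 : Real.sqrt (1 + t ^ 2) ^ 2 = 1 + t ^ 2 := Real.sq_sqrt (one_add_sq_pos t).le
  unfold ff tt
  rw [sqrt_one_sub_pow4 ht0 ht1.le]
  field_simp
  nlinarith [hB2]

lemma FF_hasDeriv {x : ℝ} (hx : x ∈ Ioo (0:ℝ) 1) : HasDerivAt FF (ff x) x := by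
  have hx' : x ∈ Ioo (-1:ℝ) 1 := ⟨by linarith [hx.1], hx.2⟩
  exact intervalIntegral.integral_hasDerivAt_right
    (ff_int ⟨le_refl 0, by norm_num⟩ ⟨hx.1.le, hx.2.le⟩)
    ((ff_contOn.stronglyMeasurableAtFilter isOpen_Ioo) x hx')
    (ff_contAt hx')

lemma tt_hasDeriv {s : ℝ} (hs : s ∈ Ioo (0:ℝ) 1) :
    HasDerivAt tt (-2 * s / (Real.sqrt (1 - s ^ 2) * Real.sqrt (1 + s ^ 2) ^ 3)) s := by
  obtain ⟨hs0, hs1⟩ := hs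
  have hA2 : Real.sqrt (1 - s ^ 2) ^ 2 = 1 - s ^ 2 := Real.sq_sqrt (by nlinarith)
  have hB2 : Real.sqrt (1 + s ^ 2) ^ 2 = 1 + s ^ 2 := Real.sq_sqrt (one_add_sq_pos s).le
  have hA : (0:ℝ) < Real.sqrt (1 - s ^ 2) := Real.sqrt_pos.2 (by nlinarith)
  have hB : (0:ℝ) < Real.sqrt (1 + s ^ 2) := Real.sqrt_pos.2 (one_add_sq_pos s)
  have h1 : HasDerivAt (fun y : ℝ => 1 - y ^ 2) (-(2 * s)) s := by
    simpa using ((hasDerivAt_pow 2 s).const_sub 1)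
  have h2 : HasDerivAt (fun y : ℝ => 1 + y ^ 2) (2 * s) s := by
    simpa using ((hasDerivAt_pow 2 s).const_add 1)
  have hAd : HasDerivAt (fun y : ℝ => Real.sqrt (1 - y ^ 2))
      (-(2 * s) / (2 * Real.sqrt (1 - s ^ 2))) s := h1.sqrt (by nlinarith)
  have hBd : HasDerivAt (fun y : ℝ => Real.sqrt (1 + y ^ 2))
      ((2 * s) / (2 * Real.sqrt (1 + s ^ 2))) s := h2.sqrt (by nlinarith)
  have : HasDerivAt tt _ s := hAd.div hBd (ne_of_gt hB)
  convert this using 1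
  field_simp
  ring_nf
  linear_combination hB2 + hA2

lemma tt_mem_Ioo {s : ℝ} (hs : s ∈ Ioo (0:ℝ) 1) : tt s ∈ Ioo (0:ℝ) 1 := by
  obtain ⟨hs0, hs1⟩ := hs
  have hA : (0:ℝ) < Real.sqrt (1 - s ^ 2) := Real.sqrt_pos.2 (by nlinarith)
  have hB : (0:ℝ) < Real.sqrt (1 + s ^ 2) := Real.sqrt_pos.2 (one_add_sq_pos s)
  constructor
  · unfold tt; positivity
  · unfold tt
    rw [div_lt_one hB]
    exact Real.sqrt_lt_sqrt (by nlinarith) (by nlinarith)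

noncomputable def psi (s : ℝ) : ℝ := FF (tt s) + FF s

lemma psi_hasDeriv {s : ℝ} (hs : s ∈ Ioo (0:ℝ) 1) : HasDerivAt psi 0 s := by
  obtain ⟨hs0, hs1⟩ := hs
  have hA2 : Real.sqrt (1 - s ^ 2) ^ 2 = 1 - s ^ 2 := Real.sq_sqrt (by nlinarith)
  have hB2 : Real.sqrt (1 + s ^ 2) ^ 2 = 1 + s ^ 2 := Real.sq_sqrt (one_add_sq_pos s).le
  have hA : (0:ℝ) < Real.sqrt (1 - s ^ 2) := Real.sqrt_pos.2 (by nlinarith)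
  have hB : (0:ℝ) < Real.sqrt (1 + s ^ 2) := Real.sqrt_pos.2 (one_add_sq_pos s)
  have hcomp : HasDerivAt (fun y => FF (tt y))
      (ff (tt s) * (-2 * s / (Real.sqrt (1 - s ^ 2) * Real.sqrt (1 + s ^ 2) ^ 3))) s :=
    (FF_hasDeriv (tt_mem_Ioo ⟨hs0, hs1⟩)).comp s (tt_hasDeriv ⟨hs0, hs1⟩)
  have hsum := hcomp.add (FF_hasDeriv ⟨hs0, hs1⟩)
  have hval : ff (tt s) * (-2 * s / (Real.sqrt (1 - s ^ 2) * Real.sqrt (1 + s ^ 2) ^ 3))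
      + ff s = 0 := by
    have htt4 : tt s ^ 4 = (1 - s ^ 2) ^ 2 / (1 + s ^ 2) ^ 2 := by
      unfold tt
      rw [div_pow, show (Real.sqrt (1 - s ^ 2)) ^ 4 = ((Real.sqrt (1 - s ^ 2)) ^ 2) ^ 2 by ring,
        show (Real.sqrt (1 + s ^ 2)) ^ 4 = ((Real.sqrt (1 + s ^ 2)) ^ 2) ^ 2 by ring, hA2, hB2]
    have hsq : 1 - tt s ^ 4 = (2 * s / (1 + s ^ 2)) ^ 2 := by
      rw [htt4]; field_simp; ring
    have hfft : ff (tt s) = (1 + s ^ 2) / (2 * s) := by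
      unfold ff
      rw [hsq, Real.sqrt_sq (by positivity), one_div, inv_div]
    have hffs : ff s = 1 / (Real.sqrt (1 - s ^ 2) * Real.sqrt (1 + s ^ 2)) := by
      unfold ff
      rw [sqrt_one_sub_pow4 hs0.le hs1.le]
    rw [hfft, hffs]
    field_simp
    linear_combination hB2
  rw [hval] at hsum
  exact hsum

lemma psi_const {s : ℝ} (hs : s ∈ Icc (0:ℝ) 1) : psi s = FF 1 := by
  have hcont : ContinuousOn psi (Icc (0:ℝ) 1) := by
    apply ContinuousOn.add
    · exact FF_contOn.comp tt_cont.continuousOn (fun x hx => tt_mem hx)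
    · exact FF_contOn
  have hdiff : DifferentiableOn ℝ psi (interior (Icc (0:ℝ) 1)) := by
    rw [interior_Icc]
    exact fun x hx => ((psi_hasDeriv hx).differentiableAt).differentiableWithinAt
  have hderiv : ∀ x ∈ interior (Icc (0:ℝ) 1), deriv psi x = 0 := by
    rw [interior_Icc]
    exact fun x hx => (psi_hasDeriv hx).deriv
  have hmono := monotoneOn_of_deriv_nonneg (convex_Icc 0 1) hcont hdiff
    (fun x hx => (hderiv x hx).ge)
  have hanti := antitoneOn_of_deriv_nonpos (convex_Icc 0 1) hcont hdiff
    (fun x hx => (hderiv x hx).le)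
  have h0 : psi 0 = FF 1 := by unfold psi; rw [tt_zero, FF_zero, add_zero]
  have h01 : (0:ℝ) ∈ Icc (0:ℝ) 1 := by norm_num
  have := hmono h01 hs hs.1
  have := hanti h01 hs hs.1
  linarith

lemma FF_tt {s : ℝ} (hs : s ∈ Icc (0:ℝ) 1) : FF (tt s) = FF 1 - FF s := by
  have := psi_const hs
  unfold psi at this
  linarith

theorem deriv_arctan_sleaf (π₂ : ℝ) (hπ : π₂ = 2 * ∫ t in (0:ℝ)..1, 1 / Real.sqrt (1 - t ^ 4))
    (sleaf : ℝ → ℝ)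
    (hs : ∀ l ∈ Set.Icc 0 (π₂ / 2), sleaf l ∈ Set.Icc (0:ℝ) 1 ∧
      (∫ t in (0:ℝ)..(sleaf l), 1 / Real.sqrt (1 - t ^ 4)) = l)
    (cleaf : ℝ → ℝ)
    (hc : ∀ l ∈ Set.Icc 0 (π₂ / 2), cleaf l ∈ Set.Icc (0:ℝ) 1 ∧
      (∫ t in (cleaf l)..1, 1 / Real.sqrt (1 - t ^ 4)) = l) :
    ∀ l ∈ Set.Icc 0 (π₂ / 2),
      derivWithin (fun x => Real.arctan (sleaf x)) (Set.Icc 0 (π₂ / 2)) l = cleaf l := by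
  intro l hl
  have hF1 : FF 1 = π₂ / 2 := by unfold FF ff; rw [hπ]; ring
  have hF1ge : (1:ℝ) ≤ FF 1 := by
    have := FF_gap (a := 0) (b := 1) le_rfl zero_le_one le_rfl
    rw [FF_zero] at this; linarith
  have hpos : (0:ℝ) < π₂ / 2 := by linarith
  have hsmem : ∀ m ∈ Icc 0 (π₂ / 2), sleaf m ∈ Icc (0:ℝ) 1 := fun m hm => (hs m hm).1
  have hsF : ∀ m ∈ Icc 0 (π₂ / 2), FF (sleaf m) = m := by
    intro m hm
    have := (hs m hm).2
    unfold FF ff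
    exact this
  have hcont11 : Continuous (fun t : ℝ => 1 / (1 + t ^ 2)) :=
    continuous_const.div (by fun_prop) (fun x => ne_of_gt (one_add_sq_pos x))
  -- key two-sided estimate
  have key : ∀ m₁ ∈ Icc 0 (π₂ / 2), ∀ m₂ ∈ Icc 0 (π₂ / 2), m₁ ≤ m₂ →
      sleaf m₂ - sleaf m₁ ≤ m₂ - m₁ ∧ 0 ≤ sleaf m₂ - sleaf m₁ ∧
      tt (sleaf m₂) * (m₂ - m₁) ≤ Real.arctan (sleaf m₂) - Real.arctan (sleaf m₁) ∧
      Real.arctan (sleaf m₂) - Real.arctan (sleaf m₁) ≤ tt (sleaf m₁) * (m₂ - m₁) := by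
    intro m₁ hm₁ m₂ hm₂ h12
    have hs₁ := hsmem m₁ hm₁; have hs₂ := hsmem m₂ hm₂
    have hF₁ := hsF m₁ hm₁; have hF₂ := hsF m₂ hm₂
    have hss : sleaf m₁ ≤ sleaf m₂ := FF_mono hs₁ hs₂ (by rw [hF₁, hF₂]; exact h12)
    have hgap := FF_gap hs₁.1 hss hs₂.2
    rw [hF₁, hF₂] at hgap
    refine ⟨hgap, by linarith, ?_, ?_⟩
    · -- lower bound
      have harc : Real.arctan (sleaf m₂) - Real.arctan (sleaf m₁)
          = ∫ t in (sleaf m₁)..(sleaf m₂), 1 / (1 + t ^ 2) := by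
        rw [integral_one_div_one_add_sq]
      have hFint : (∫ t in (sleaf m₁)..(sleaf m₂), ff t) = m₂ - m₁ := by
        rw [← FF_sub hs₁ hs₂, hF₁, hF₂]
      have hmono : (∫ t in (sleaf m₁)..(sleaf m₂), ff t * tt (sleaf m₂))
          ≤ ∫ t in (sleaf m₁)..(sleaf m₂), 1 / (1 + t ^ 2) := by
        apply intervalIntegral.integral_mono_ae_restrict hss
          ((ff_int hs₁ hs₂).mul_const _)
          (hcont11.intervalIntegrable _ _)
        rw [Filter.EventuallyLE, ae_restrict_iff' measurableSet_Icc]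
        filter_upwards [ae_ne_one] with t ht htm
        have ht0 : 0 ≤ t := le_trans hs₁.1 htm.1
        have ht1 : t < 1 := lt_of_le_of_ne (le_trans htm.2 hs₂.2) ht
        show ff t * tt (sleaf m₂) ≤ 1 / (1 + t ^ 2)
        rw [← ff_mul_tt ht0 ht1]
        exact mul_le_mul_of_nonneg_left
          (tt_anti ⟨ht0, ht1.le⟩ hs₂ htm.2) (ff_nonneg t)
      rw [intervalIntegral.integral_mul_const, hFint] at hmono
      rw [harc]
      calc tt (sleaf m₂) * (m₂ - m₁) = (m₂ - m₁) * tt (sleaf m₂) := by ring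
      _ ≤ _ := hmono
    · -- upper bound
      have harc : Real.arctan (sleaf m₂) - Real.arctan (sleaf m₁)
          = ∫ t in (sleaf m₁)..(sleaf m₂), 1 / (1 + t ^ 2) := by
        rw [integral_one_div_one_add_sq]
      have hFint : (∫ t in (sleaf m₁)..(sleaf m₂), ff t) = m₂ - m₁ := by
        rw [← FF_sub hs₁ hs₂, hF₁, hF₂]
      have hmono : (∫ t in (sleaf m₁)..(sleaf m₂), 1 / (1 + t ^ 2))
          ≤ ∫ t in (sleaf m₁)..(sleaf m₂), ff t * tt (sleaf m₁) := by
        apply intervalIntegral.integral_mono_ae_restrict hss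
          (hcont11.intervalIntegrable _ _)
          ((ff_int hs₁ hs₂).mul_const _)
        rw [Filter.EventuallyLE, ae_restrict_iff' measurableSet_Icc]
        filter_upwards [ae_ne_one] with t ht htm
        have ht0 : 0 ≤ t := le_trans hs₁.1 htm.1
        have ht1 : t < 1 := lt_of_le_of_ne (le_trans htm.2 hs₂.2) ht
        show 1 / (1 + t ^ 2) ≤ ff t * tt (sleaf m₁)
        rw [← ff_mul_tt ht0 ht1]
        exact mul_le_mul_of_nonneg_left
          (tt_anti hs₁ ⟨ht0, ht1.le⟩ htm.1) (ff_nonneg t)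
      rw [intervalIntegral.integral_mul_const, hFint] at hmono
      rw [harc]
      calc (∫ t in (sleaf m₁)..(sleaf m₂), 1 / (1 + t ^ 2))
          ≤ (m₂ - m₁) * tt (sleaf m₁) := hmono
      _ = tt (sleaf m₁) * (m₂ - m₁) := by ring
  -- identify cleaf
  have hsl := hsmem l hl
  have hcl : cleaf l = tt (sleaf l) := by
    have hclm := (hc l hl).1
    have hint : (∫ t in (cleaf l)..1, ff t) = l := by
      have := (hc l hl).2; unfold ff; exact this
    have hadd := intervalIntegral.integral_add_adjacent_intervals
      (ff_int ⟨le_rfl, by norm_num⟩ hclm) (ff_int hclm ⟨by norm_num, le_rfl⟩) (μ := volume)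
    have h2 : FF (cleaf l) = FF 1 - l := by
      unfold FF
      linarith [hadd, hint]
    have h3 : FF (tt (sleaf l)) = FF 1 - l := by rw [FF_tt hsl, hsF l hl]
    exact FF_inj hclm (tt_mem hsl) (h2.trans h3.symm)
  rw [hcl]
  apply HasDerivWithinAt.derivWithin _ ((uniqueDiffOn_Icc hpos) l hl)
  rw [hasDerivWithinAt_iff_isLittleO, Asymptotics.isLittleO_iff]
  intro c hcpos
  -- continuity of tt ∘ sleaf within the interval
  have hlip : LipschitzOnWith 1 sleaf (Icc 0 (π₂ / 2)) := by
    apply LipschitzOnWith.of_dist_le_mul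
    intro x hx y hy
    rw [Real.dist_eq, Real.dist_eq, NNReal.coe_one, one_mul]
    rcases le_total x y with h | h
    · obtain ⟨h1, h2, _, _⟩ := key x hx y hy h
      have e1 : |sleaf x - sleaf y| = sleaf y - sleaf x := by
        rw [abs_sub_comm]; exact abs_of_nonneg h2
      have e2 : |x - y| = y - x := by
        rw [abs_sub_comm]; exact abs_of_nonneg (by linarith)
      rw [e1, e2]; linarith
    · obtain ⟨h1, h2, _, _⟩ := key y hy x hx h
      have e1 : |sleaf x - sleaf y| = sleaf x - sleaf y := abs_of_nonneg h2
      have e2 : |x - y| = x - y := abs_of_nonneg (by linarith)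
      rw [e1, e2]; linarith
  have hcont : ContinuousWithinAt (fun x => tt (sleaf x)) (Icc 0 (π₂ / 2)) l :=
    tt_cont.continuousAt.comp_continuousWithinAt ((hlip.continuousOn) l hl)
  have hev : ∀ᶠ x in nhdsWithin l (Icc 0 (π₂ / 2)), |tt (sleaf x) - tt (sleaf l)| < c := by
    have htd := hcont.tendsto (Metric.ball_mem_nhds (tt (sleaf l)) hcpos)
    filter_upwards [htd] with x hx
    rw [Set.mem_preimage, Metric.mem_ball, Real.dist_eq] at hx
    exact hx
  filter_upwards [hev, self_mem_nhdsWithin] with x hx hxI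
  rw [smul_eq_mul, Real.norm_eq_abs, Real.norm_eq_abs]
  obtain ⟨hb1, hb2⟩ := abs_lt.1 hx
  rcases le_total l x with h | h
  · obtain ⟨_, _, hlow, hhigh⟩ := key l hl x hxI h
    have hxl : (0:ℝ) ≤ x - l := by linarith
    rw [abs_of_nonneg hxl, abs_le]
    constructor
    · nlinarith [mul_le_mul_of_nonneg_right hb1.le hxl]
    · nlinarith [mul_nonneg hcpos.le hxl]
  · obtain ⟨_, _, hlow, hhigh⟩ := key x hxI l hl h
    have hlx : (0:ℝ) ≤ l - x := by linarith
    rw [abs_of_nonpos (by linarith : x - l ≤ 0), abs_le]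
    constructor
    · nlinarith [mul_nonneg hcpos.le hlx]
    · nlinarith [mul_le_mul_of_nonneg_right hb2.le hlx]
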